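/- Let 0 < q < p < ∞ with 1/r = 1/q - 1/p, and let (Ω,μ) be a probability space. Suppose 𝓕 is a family of nonnegative measurable functions satisfying: ‖sup_j |c_j f_j|‖_{q,∞} ≤ C(Σ_j |c_j|^p)^{1/p} for all finite choices f_j ∈ 𝓕 and scalars c_j. Then for every 0 < δ < 1 there exists a measurable set E_δ with μ(E_δ) ≥ 1 - δ and sup_{f∈𝓕} ‖1_{E_δ} f‖_{p,∞} ≤ C δ^{-1/r}. -/

import Mathlib

open MeasureTheory ENNReal Filter

/-- The weak-`L_s` quasi-norm `‖f‖_{s,∞} = sup_{t>0} t · μ({|f| > t})^{1/s}`. -/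
noncomputable def weakNorm {Ω : Type*} [MeasurableSpace Ω] (μ : Measure Ω) (s : ℝ)
    (f : Ω → ℝ) : ℝ≥0∞ :=
  ⨆ (t : ℝ) (_ : 0 < t), ENNReal.ofReal t * μ {ω | t < |f ω|} ^ (1 / s)

lemma weakNorm_term_le {Ω : Type*} [MeasurableSpace Ω] (μ : Measure Ω) (s : ℝ)
    (f : Ω → ℝ) {t : ℝ} (ht : 0 < t) :
    ENNReal.ofReal t * μ {ω | t < |f ω|} ^ (1 / s) ≤ weakNorm μ s f :=
  le_iSup₂ (f := fun (t : ℝ) (_ : 0 < t) => ENNReal.ofReal t * μ {ω | t < |f ω|} ^ (1 / s)) t ht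

/-- N2 ⇒ N3 of the extended Nikishin theorem: from the maximal estimate with constant `C`,
for every `0 < δ < 1` there is a set `E_δ` with `μ(E_δ) ≥ 1 - δ` and
`sup_{f∈𝓕} ‖1_{E_δ} f‖_{p,∞} ≤ C δ^{-1/r}`. -/
theorem nikishin_N2_implies_N3 {Ω : Type*} [MeasurableSpace Ω] (μ : Measure Ω)
    [IsProbabilityMeasure μ] (q p r C : ℝ) (hq : 0 < q) (hqp : q < p)
    (hr : 1 / r = 1 / q - 1 / p) (hC : 0 < C)
    (𝓕 : Set (Ω → ℝ)) (h𝓕 : ∀ f ∈ 𝓕, Measurable f ∧ ∀ ω, 0 ≤ f ω)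
    (hmax : ∀ (n : ℕ) (f : Fin n → Ω → ℝ), (∀ j, f j ∈ 𝓕) → ∀ c : Fin n → ℝ,
      weakNorm μ q (fun ω => ⨆ j, |c j * f j ω|) ≤
        ENNReal.ofReal (C * (∑ j, |c j| ^ p) ^ (1 / p))) :
    ∀ δ : ℝ, 0 < δ → δ < 1 →
      ∃ E : Set Ω, MeasurableSet E ∧ 1 - ENNReal.ofReal δ ≤ μ E ∧
        ∀ f ∈ 𝓕, weakNorm μ p (E.indicator f) ≤ ENNReal.ofReal (C * δ ^ (-(1 / r))) := by
  classical
  intro δ hδ0 hδ1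
  rcases Set.eq_empty_or_nonempty 𝓕 with h𝓕e | ⟨f₀, hf₀⟩
  · refine ⟨Set.univ, MeasurableSet.univ, by simp, ?_⟩
    simp [h𝓕e]
  have hp0 : 0 < p := hq.trans hqp
  have hp0' : (0:ℝ) < 1 / p := by positivity
  have hq0' : (0:ℝ) < 1 / q := by positivity
  have hrpos : (0:ℝ) < 1 / r := by
    rw [hr]; have := one_div_lt_one_div_of_lt hq hqp; linarith
  set K : ℝ := C * δ ^ (-(1 / r)) with hK
  have hKp : 0 < K := mul_pos hC (Real.rpow_pos_of_pos hδ0 _)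
  -- the notion of a "bad" set
  set Bad : Set Ω → Prop := fun A => MeasurableSet A ∧ ∃ f ∈ 𝓕, ∃ t : ℝ, 0 < t ∧
      A ⊆ {ω | t < f ω} ∧ ENNReal.ofReal K < ENNReal.ofReal t * μ A ^ (1 / p) with hBad
  -- key finite lemma: a finite disjoint family of bad (or empty) sets has union of measure ≤ δ
  have key : ∀ (N : ℕ) (A : Fin N → Set Ω), (∀ j, A j = ∅ ∨ Bad (A j)) →
      Pairwise (Function.onFun Disjoint A) → μ (⋃ j, A j) ≤ ENNReal.ofReal δ := by
    intro N A hA hdisj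
    have hAm : ∀ j, MeasurableSet (A j) := by
      intro j; rcases hA j with h | h
      · rw [h]; exact MeasurableSet.empty
      · exact h.1
    have hw : ∀ j, ∃ f, f ∈ 𝓕 ∧ ∃ t : ℝ, 0 < t ∧ A j ⊆ {ω | t < f ω} ∧
        (A j ≠ ∅ → ENNReal.ofReal K < ENNReal.ofReal t * μ (A j) ^ (1 / p)) := by
      intro j
      rcases hA j with h | ⟨_, f, hf, t, ht, hsub, hlt⟩
      · exact ⟨f₀, hf₀, 1, one_pos, by rw [h]; exact Set.empty_subset _,
          fun hne => absurd h hne⟩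
      · exact ⟨f, hf, t, ht, hsub, fun _ => hlt⟩
    choose f hf t ht hsub hlt using hw
    set c : Fin N → ℝ := fun j => if A j = ∅ then 0 else (t j)⁻¹ with hc
    set S : ℝ := ∑ j, |c j| ^ p with hS
    have hS0 : 0 ≤ S := Finset.sum_nonneg fun j _ => Real.rpow_nonneg (abs_nonneg _) _
    set g : Ω → ℝ := fun ω => ⨆ j, |c j * f j ω| with hg
    -- step 1 : (μ ⋃)^{1/q} ≤ ofReal (C * S^{1/p})
    have hmax' : weakNorm μ q g ≤ ENNReal.ofReal (C * S ^ (1 / p)) := hmax N f hf c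
    have step1 : (μ (⋃ j, A j)) ^ (1 / q) ≤ ENNReal.ofReal (C * S ^ (1 / p)) := by
      refine ENNReal.le_of_forall_lt_one_mul_le fun a ha => ?_
      rcases eq_or_ne a 0 with rfl | ha0
      · simp
      have haT : a ≠ ⊤ := ha.ne_top
      have has : 0 < a.toReal := ENNReal.toReal_pos ha0 haT
      have has1 : a.toReal < 1 := by
        have := ENNReal.toReal_lt_toReal haT one_ne_top |>.mpr ha
        simpa using this
      have hsub2 : (⋃ j, A j) ⊆ {ω | a.toReal < |g ω|} := by
        rintro ω hω
        obtain ⟨j, hj⟩ := Set.mem_iUnion.mp hω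
        have hne : A j ≠ ∅ := Set.nonempty_iff_ne_empty.mp ⟨ω, hj⟩
        have hcj : c j = (t j)⁻¹ := by simp [hc, hne]
        have hfω : t j < f j ω := hsub j hj
        have hfpos : 0 < f j ω := (ht j).trans hfω
        have hprod : 0 < c j * f j ω := by
          rw [hcj]; exact mul_pos (inv_pos.2 (ht j)) hfpos
        have h1 : (1:ℝ) < |c j * f j ω| := by
          rw [abs_of_pos hprod, hcj, inv_mul_eq_div, lt_div_iff₀ (ht j), one_mul]
          exact hfω
        have h2 : |c j * f j ω| ≤ ⨆ j', |c j' * f j' ω| :=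
          le_ciSup (f := fun j' => |c j' * f j' ω|)
            (Set.Finite.bddAbove (Set.finite_range _)) j
        have h3 : (1:ℝ) < g ω := h1.trans_le h2
        show a.toReal < |g ω|
        exact lt_of_lt_of_le has1 (le_trans h3.le (le_abs_self _))
      have hterm := weakNorm_term_le μ q g has
      have hmono : μ (⋃ j, A j) ≤ μ {ω | a.toReal < |g ω|} :=
        measure_mono hsub2
      calc a * (μ (⋃ j, A j)) ^ (1 / q)
          = ENNReal.ofReal a.toReal * (μ (⋃ j, A j)) ^ (1 / q) := by
            rw [ENNReal.ofReal_toReal haT]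
        _ ≤ ENNReal.ofReal a.toReal * μ {ω | a.toReal < |g ω|} ^ (1 / q) := by
            gcongr
        _ ≤ weakNorm μ q g := hterm
        _ ≤ ENNReal.ofReal (C * S ^ (1 / p)) := hmax'
    -- step 2 : real estimates
    set a : Fin N → ℝ := fun j => (μ (A j)).toReal with ha
    have ha0 : ∀ j, 0 ≤ a j := fun j => ENNReal.toReal_nonneg
    have hμAj : ∀ j, μ (A j) = ENNReal.ofReal (a j) :=
      fun j => (ENNReal.ofReal_toReal (measure_ne_top μ _)).symm
    set M : ℝ := ∑ j, a j with hM
    have hM0 : 0 ≤ M := Finset.sum_nonneg fun j _ => ha0 j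
    have hμU : μ (⋃ j, A j) = ENNReal.ofReal M := by
      rw [measure_iUnion hdisj hAm, tsum_fintype, hM,
        ENNReal.ofReal_sum_of_nonneg fun j _ => ha0 j]
      exact Finset.sum_congr rfl fun j _ => hμAj j
    have hcj : ∀ j, |c j| ^ p ≤ a j / K ^ p := by
      intro j
      by_cases hje : A j = ∅
      · have : c j = 0 := by simp [hc, hje]
        rw [this, abs_zero, Real.zero_rpow (ne_of_gt hp0)]
        positivity
      · have hlt' := hlt j hje
        rw [hμAj j, ENNReal.ofReal_rpow_of_nonneg (ha0 j) hp0'.le,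
          ← ENNReal.ofReal_mul (ht j).le] at hlt'
        have hKlt : K < t j * a j ^ (1 / p) :=
          (ENNReal.ofReal_lt_ofReal_iff_of_nonneg hKp.le).mp hlt'
        have haj : 0 < a j := by
          by_contra h
          push_neg at h
          have h0 : a j = 0 := le_antisymm h (ha0 j)
          rw [h0, Real.zero_rpow (ne_of_gt hp0'), mul_zero] at hKlt
          exact absurd hKlt (not_lt.2 hKp.le)
        have h2 : K ^ p < t j ^ p * a j := by
          have h3 := Real.rpow_lt_rpow hKp.le hKlt hp0
          rwa [Real.mul_rpow (ht j).le (Real.rpow_nonneg (ha0 j) _),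
            ← Real.rpow_mul (ha0 j), one_div_mul_cancel (ne_of_gt hp0),
            Real.rpow_one] at h3
        have hcc : |c j| ^ p = (t j ^ p)⁻¹ := by
          have : c j = (t j)⁻¹ := by simp [hc, hje]
          rw [this, abs_of_pos (inv_pos.2 (ht j)), Real.inv_rpow (ht j).le]
        rw [hcc, inv_eq_one_div,
          div_le_div_iff₀ (Real.rpow_pos_of_pos (ht j) p) (Real.rpow_pos_of_pos hKp p)]
        nlinarith [h2]
    have hSM : S ≤ M / K ^ p := by
      rw [hS, hM, Finset.sum_div]
      exact Finset.sum_le_sum fun j _ => hcj j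
    -- step 3 : C * S^{1/p} ≤ δ^{1/r} * M^{1/p}
    have hCK : C / K = δ ^ (1 / r) := by
      rw [hK, Real.rpow_neg hδ0.le]
      field_simp
    have step3 : C * S ^ (1 / p) ≤ δ ^ (1 / r) * M ^ (1 / p) := by
      have h1 : S ^ (1 / p) ≤ (M / K ^ p) ^ (1 / p) :=
        Real.rpow_le_rpow hS0 hSM hp0'.le
      have h2 : (M / K ^ p) ^ (1 / p) = M ^ (1 / p) / K := by
        rw [Real.div_rpow hM0 (Real.rpow_nonneg hKp.le _), ← Real.rpow_mul hKp.le,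
          mul_one_div_cancel (ne_of_gt hp0), Real.rpow_one]
      calc C * S ^ (1 / p) ≤ C * (M ^ (1 / p) / K) := by
            rw [← h2]; exact mul_le_mul_of_nonneg_left h1 hC.le
        _ = (C / K) * M ^ (1 / p) := by ring
        _ = δ ^ (1 / r) * M ^ (1 / p) := by rw [hCK]
    -- combine
    rcases hM0.lt_or_eq with hMpos | hMzero
    · have hfin : M ^ (1 / q) ≤ δ ^ (1 / r) * M ^ (1 / p) := by
        have h1 : (ENNReal.ofReal M) ^ (1 / q) ≤ ENNReal.ofReal (C * S ^ (1 / p)) := by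
          rw [← hμU]; exact step1
        rw [ENNReal.ofReal_rpow_of_nonneg hM0 hq0'.le] at h1
        have h2 : M ^ (1 / q) ≤ C * S ^ (1 / p) := by
          have hCS : 0 ≤ C * S ^ (1 / p) := by positivity
          exact (ENNReal.ofReal_le_ofReal_iff hCS).mp h1
        exact h2.trans step3
      have hsplit : M ^ (1 / q) = M ^ (1 / r) * M ^ (1 / p) := by
        rw [← Real.rpow_add hMpos]
        congr 1
        rw [hr]; ring
      have hMr : M ^ (1 / r) ≤ δ ^ (1 / r) := by
        rw [hsplit] at hfin
        exact le_of_mul_le_mul_right hfin (Real.rpow_pos_of_pos hMpos _)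
      have hMδ : M ≤ δ := by
        by_contra h
        push_neg at h
        exact absurd hMr (not_le.2 (Real.rpow_lt_rpow hδ0.le h hrpos))
      rw [hμU]
      exact ENNReal.ofReal_le_ofReal hMδ
    · rw [hμU, ← hMzero]
      simp
  -- greedy construction of a maximal disjoint family of bad sets
  set Cand : (ℕ → Set Ω) → ℕ → Set (Set Ω) :=
    fun g n => {B | Bad B ∧ ∀ m < n, Disjoint B (g m)} with hCandDef
  have hpick : ∀ (g : ℕ → Set Ω) (n : ℕ), ∃ B : Set Ω,
      (B = ∅ ∨ B ∈ Cand g n) ∧ (⨆ B' ∈ Cand g n, μ B') ≤ 2 * μ B := by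
    intro g n
    set s := ⨆ B' ∈ Cand g n, μ B' with hs
    rcases eq_or_ne s 0 with h0 | hne
    · exact ⟨∅, Or.inl rfl, by rw [h0]; exact zero_le⟩
    · have hsT : s ≠ ⊤ := by
        refine ne_top_of_le_ne_top one_ne_top ?_
        exact iSup₂_le fun B _ => prob_le_one
      have hlt : s / 2 < s := ENNReal.half_lt_self hne hsT
      have hlt2 : s / 2 < ⨆ B' ∈ Cand g n, μ B' := lt_of_lt_of_le hlt (le_of_eq hs)
      obtain ⟨B, hB, hBlt⟩ : ∃ B ∈ Cand g n, s / 2 < μ B := by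
        simpa [lt_iSup_iff] using hlt2
      refine ⟨B, Or.inr hB, ?_⟩
      calc s = s / 2 * 2 := (ENNReal.div_mul_cancel (two_ne_zero) (ofNat_ne_top)).symm
        _ ≤ μ B * 2 := mul_le_mul_left hBlt.le 2
        _ = 2 * μ B := mul_comm _ _
  choose pick hpick1 hpick2 using hpick
  set G : ℕ → (ℕ → Set Ω) :=
    fun n => Nat.rec (fun _ => (∅ : Set Ω))
      (fun n g => Function.update g n (pick g n)) n with hG
  set A : ℕ → Set Ω := fun n => G (n + 1) n with hAdef
  have hGsucc : ∀ n, G (n + 1) = Function.update (G n) n (pick (G n) n) := fun n => rfl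
  have hApick : ∀ n, A n = pick (G n) n := by
    intro n
    rw [hAdef]
    show G (n + 1) n = _
    rw [hGsucc n, Function.update_self]
  have hGA : ∀ n m, m < n → G n m = A m := by
    intro n
    induction n with
    | zero => intro m hm; omega
    | succ n ih =>
      intro m hm
      rcases Nat.lt_succ_iff_lt_or_eq.mp hm with h | h
      · rw [hGsucc n, Function.update_of_ne (by omega), ih m h]
      · subst h
        rw [hGsucc m, Function.update_self, hApick m]
  have hCandA : ∀ n, Cand (G n) n = Cand A n := by
    intro n
    ext B
    simp only [hCandDef, Set.mem_setOf_eq]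
    constructor
    · rintro ⟨h1, h2⟩
      exact ⟨h1, fun m hm => by rw [← hGA n m hm]; exact h2 m hm⟩
    · rintro ⟨h1, h2⟩
      exact ⟨h1, fun m hm => by rw [hGA n m hm]; exact h2 m hm⟩
  have hA1 : ∀ n, A n = ∅ ∨ A n ∈ Cand A n := by
    intro n
    have := hpick1 (G n) n
    rw [hCandA n, ← hApick n] at this
    exact this
  have hA2 : ∀ n, (⨆ B' ∈ Cand A n, μ B') ≤ 2 * μ (A n) := by
    intro n
    have := hpick2 (G n) n
    rw [hCandA n, ← hApick n] at this
    exact this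
  have hAbad : ∀ n, A n = ∅ ∨ Bad (A n) := by
    intro n
    rcases hA1 n with h | h
    · exact Or.inl h
    · exact Or.inr h.1
  have hAmeas : ∀ n, MeasurableSet (A n) := by
    intro n
    rcases hAbad n with h | h
    · rw [h]; exact MeasurableSet.empty
    · exact h.1
  have hAdisj : Pairwise (Function.onFun Disjoint A) := by
    have hlt' : ∀ m n, m < n → Disjoint (A n) (A m) := by
      intro m n hmn
      rcases hA1 n with h | h
      · rw [h]; exact disjoint_bot_left
      · exact h.2 m hmn
    intro m n hmn
    rcases lt_or_gt_of_ne hmn with h | h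
    · exact (hlt' m n h).symm
    · exact hlt' n m h
  have htsum : ∑' n, μ (A n) ≤ ENNReal.ofReal δ := by
    rw [ENNReal.tsum_eq_iSup_sum]
    refine iSup_le fun s => ?_
    obtain ⟨N, hsN⟩ := s.exists_nat_subset_range
    have hd : Pairwise (Function.onFun Disjoint fun j : Fin N => A j) := by
      intro i j hij
      exact hAdisj (Fin.val_ne_of_ne hij)
    calc ∑ n ∈ s, μ (A n) ≤ ∑ n ∈ Finset.range N, μ (A n) :=
          Finset.sum_le_sum_of_subset hsN
      _ = ∑ j : Fin N, μ (A j) := Finset.sum_range fun n => μ (A n)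
      _ = μ (⋃ j : Fin N, A j) := by
          rw [measure_iUnion hd fun j => hAmeas j, tsum_fintype]
      _ ≤ ENNReal.ofReal δ := key N (fun j => A j) (fun j => hAbad j) hd
  refine ⟨(⋃ n, A n)ᶜ, (MeasurableSet.iUnion hAmeas).compl, ?_, ?_⟩
  · have h1 : μ (⋃ n, A n) ≤ ENNReal.ofReal δ :=
      le_trans (measure_iUnion_le A) htsum
    have h2 : μ ((⋃ n, A n)ᶜ) = 1 - μ (⋃ n, A n) := by
      rw [measure_compl (MeasurableSet.iUnion hAmeas) (measure_ne_top μ _)]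
      simp
    rw [h2]
    exact tsub_le_tsub_left h1 1
  · intro f hf
    refine iSup₂_le fun s hs => ?_
    set B : Set Ω := {ω | s < |Set.indicator (⋃ n, A n)ᶜ f ω|} with hBdef
    have hBeq : B = (⋃ n, A n)ᶜ ∩ {ω | s < f ω} := by
      ext ω
      simp only [hBdef, Set.mem_setOf_eq, Set.mem_inter_iff]
      by_cases hω : ω ∈ (⋃ n, A n)ᶜ
      · rw [Set.indicator_of_mem hω, abs_of_nonneg ((h𝓕 f hf).2 ω)]
        tauto
      · rw [Set.indicator_of_notMem hω]
        simp only [abs_zero]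
        constructor
        · intro h; exact absurd (hs.trans h) (lt_irrefl 0)
        · tauto
    by_contra hcon
    push_neg at hcon
    have hBbad : Bad B := by
      refine ⟨?_, f, hf, s, hs, ?_, hcon⟩
      · rw [hBeq]
        exact ((MeasurableSet.iUnion hAmeas).compl).inter
          (measurableSet_lt measurable_const (h𝓕 f hf).1)
      · rw [hBeq]; exact Set.inter_subset_right
    have hBdisj : ∀ m, Disjoint B (A m) := by
      intro m
      rw [hBeq]
      exact Set.disjoint_of_subset_left Set.inter_subset_left
        (Set.disjoint_compl_left_iff_subset.mpr (Set.subset_iUnion A m))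
    have hBmem : ∀ n, B ∈ Cand A n := fun n => ⟨hBbad, fun m _ => hBdisj m⟩
    have hμB : ∀ n, μ B ≤ 2 * μ (A n) := by
      intro n
      refine le_trans ?_ (hA2 n)
      exact le_iSup₂ (f := fun B' (_ : B' ∈ Cand A n) => μ B') B (hBmem n)
    have hten : Tendsto (fun n => 2 * μ (A n)) atTop (nhds 0) := by
      have h0 : Tendsto (fun n => μ (A n)) atTop (nhds 0) :=
        ENNReal.tendsto_atTop_zero_of_tsum_ne_top
          (ne_top_of_le_ne_top ofReal_ne_top htsum)
      have := ENNReal.Tendsto.const_mul h0 (Or.inr (ofNat_ne_top (n := 2)))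
      simpa using this
    have hμB0 : μ B = 0 := le_antisymm (ge_of_tendsto' hten hμB) zero_le
    rw [hμB0, ENNReal.zero_rpow_of_pos hp0', mul_zero] at hcon
    exact absurd hcon (not_lt.2 zero_le)
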